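/- Assume W : ℝ^d → ℝ ∪ {+∞} satisfies Hypotheses (H1), (H2) and (H3a). Then every minimiser X ∈ (ℝ^d)^N of the discrete interaction energy E_N satisfies |P_i(X) − 2E_N(X)| ≤ (W(0) − W_min)/N for all i ∈ {1,…,N}. -/

import Mathlib

open MeasureTheory Filter Topology
open scoped ENNReal NNReal

/-- The nonnegative part of an extended real, as a value in `ℝ≥0∞`. -/
noncomputable def erealToENNReal (a : EReal) : ℝ≥0∞ :=
  if a = ⊤ then ⊤ else ENNReal.ofReal a.toReal

noncomputable section

/-- Euclidean space ℝ^d. -/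
abbrev Euc (d : ℕ) : Type := EuclideanSpace ℝ (Fin d)

/-- Signed integral of an `EReal`-valued function (positive part minus negative part). -/
noncomputable def eintegral {α : Type*} [MeasurableSpace α] (μ : Measure α) (f : α → EReal) :
    EReal :=
  ((∫⁻ x, erealToENNReal (f x) ∂μ : ℝ≥0∞) : EReal) -
    ((∫⁻ x, erealToENNReal (-f x) ∂μ : ℝ≥0∞) : EReal)

/-- Continuum interaction energy `E(ρ) = (1/2) ∬ W(x−y) dρ(x) dρ(y)`. -/
noncomputable def contEnergy {d : ℕ} (W : Euc d → EReal) (ρ : Measure (Euc d)) : EReal :=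
  (((1 : ℝ) / 2 : ℝ) : EReal) * eintegral (ρ.prod ρ) fun p => W (p.1 - p.2)

/-- Discrete interaction energy `E_N(X) = (1/(2N²)) Σ_{i≠j} W(x_i − x_j)`. -/
noncomputable def discEnergy {d : ℕ} (W : Euc d → EReal) (N : ℕ) (X : Fin N → Euc d) : EReal :=
  (((1 : ℝ) / (2 * (N : ℝ) ^ 2) : ℝ) : EReal) *
    ∑ i : Fin N, ∑ j ∈ Finset.univ.erase i, W (X i - X j)

/-- `P_i(X) = (1/N) Σ_{j≠i} W(x_i − x_j)`, the potential felt by particle `i`. -/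
noncomputable def particlePotential {d : ℕ} (W : Euc d → EReal) (N : ℕ) (X : Fin N → Euc d)
    (i : Fin N) : EReal :=
  (((N : ℝ)⁻¹ : ℝ) : EReal) * ∑ j ∈ Finset.univ.erase i, W (X i - X j)

/-- Empirical measure `μ_X = (1/N) Σ δ_{x_i}`. -/
noncomputable def empMeasure {d N : ℕ} (X : Fin N → Euc d) : Measure (Euc d) :=
  (N : ℝ≥0∞)⁻¹ • ∑ i : Fin N, Measure.dirac (X i)

/-- `X` is a global minimiser of the discrete energy `E_N`. -/
def IsDiscMinimiser {d : ℕ} (W : Euc d → EReal) (N : ℕ) (X : Fin N → Euc d) : Prop :=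
  ∀ Y : Fin N → Euc d, discEnergy W N X ≤ discEnergy W N Y

/-- `ρ` is a Borel probability measure minimising the continuum energy over all
Borel probability measures. -/
def IsContMinimiser {d : ℕ} (W : Euc d → EReal) (ρ : Measure (Euc d)) : Prop :=
  IsProbabilityMeasure ρ ∧
    ∀ ν : Measure (Euc d), IsProbabilityMeasure ν → contEnergy W ρ ≤ contEnergy W ν

/-- Narrow convergence of a sequence of measures, in duality with bounded continuous
functions. -/
def NarrowTendsto {d : ℕ} (μ : ℕ → Measure (Euc d)) (ρ : Measure (Euc d)) : Prop :=
  ∀ f : BoundedContinuousFunction (Euc d) ℝ,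
    Tendsto (fun N => ∫ x, f x ∂μ N) atTop (nhds (∫ x, f x ∂ρ))

/-- Support of a measure. -/
def measSupport {d : ℕ} (ρ : Measure (Euc d)) : Set (Euc d) :=
  {x | ∀ r : ℝ, 0 < r → 0 < ρ (Metric.ball x r)}

/-- Average of `W` over the ball of radius `ε` centred at `x`. -/
noncomputable def ballAvg {d : ℕ} (W : Euc d → EReal) (x : Euc d) (ε : ℝ) : EReal :=
  (((volume (Metric.ball x ε)).toReal⁻¹ : ℝ) : EReal) *
    eintegral (volume.restrict (Metric.ball x ε)) W

/-- Generalised Laplacian `Δ⁰W(x) = liminf_{ε→0⁺} (2(d+2)/ε²)(⨍_{B_ε(x)} W − W(x))`. -/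
noncomputable def genLap {d : ℕ} (W : Euc d → EReal) (x : Euc d) : EReal :=
  Filter.liminf
    (fun ε : ℝ => (((2 * ((d : ℝ) + 2) / ε ^ 2) : ℝ) : EReal) * (ballAvg W x ε - W x))
    (nhdsWithin (0 : ℝ) (Set.Ioi 0))

/-- Local integrability of an `EReal`-valued function. -/
def ERealLocInt {d : ℕ} (W : Euc d → EReal) : Prop :=
  ∀ K : Set (Euc d), IsCompact K →
    (∫⁻ x in K, erealToENNReal (W x)) < ⊤ ∧ (∫⁻ x in K, erealToENNReal (-W x)) < ⊤

/-- `W` is β-repulsive at the origin. -/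
def BetaRepulsive {d : ℕ} (W : Euc d → EReal) (β : ℝ) : Prop :=
  ERealLocInt W ∧
    ∃ δ : ℝ, 0 < δ ∧ ∃ C : ℝ, 0 < C ∧
      (∀ x : Euc d, 0 < ‖x‖ → ‖x‖ < δ → ((C * ‖x‖ ^ (-β) : ℝ) : EReal) ≤ -genLap W x) ∧
      genLap W (0 : Euc d) = ⊥

/-- Hypothesis (H1): `W` is lower semicontinuous, bounded below by `Wmin` and locally
integrable. -/
def Hyp1 {d : ℕ} (W : Euc d → EReal) (Wmin : ℝ) : Prop :=
  LowerSemicontinuous W ∧ (∀ x, (Wmin : EReal) ≤ W x) ∧ ERealLocInt W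

/-- Hypothesis (H2): `W(x) → Winf` as `|x| → ∞`, `W` is symmetric, and `W` is radially
strictly increasing outside the ball of radius `RW > 0`. -/
def Hyp2 {d : ℕ} (W : Euc d → EReal) (Winf : EReal) (RW : ℝ) : Prop :=
  Tendsto W (cocompact (Euc d)) (nhds Winf) ∧ (∀ x, W (-x) = W x) ∧ 0 < RW ∧
    ∀ e : Euc d, ‖e‖ = 1 → ∀ r s : ℝ, RW ≤ r → r < s → W (r • e) < W (s • e)

/-- Hypothesis (H3a): `W` is bounded from above and upper semicontinuous. -/
def Hyp3a {d : ℕ} (W : Euc d → EReal) : Prop :=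
  (∃ C : ℝ, ∀ x, W x ≤ (C : EReal)) ∧ UpperSemicontinuous W

/-- Hypothesis (H3b): `W` is β-repulsive with `2 < β < d`, is `C¹` away from the origin,
and satisfies `Δ⁰W ≤ C_W`, `W(x) ≤ C_W|x|^{2−β}` and `|∇W(x)| ≤ C_W|x|^{1−β}` for `|x| ≤ 1`. -/
def Hyp3b {d : ℕ} (W : Euc d → EReal) (β C_W : ℝ) : Prop :=
  2 < β ∧ β < d ∧ 0 < C_W ∧ BetaRepulsive W β ∧
    (∃ g : Euc d → ℝ, (∀ x : Euc d, x ≠ 0 → W x = (g x : EReal)) ∧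
      ContDiffOn ℝ 1 g {(0 : Euc d)}ᶜ ∧
      ∀ x : Euc d, x ≠ 0 → ‖x‖ ≤ 1 → ‖fderiv ℝ g x‖ ≤ C_W * ‖x‖ ^ ((1 : ℝ) - β)) ∧
    (∀ x, genLap W x ≤ (C_W : EReal)) ∧
    ∀ x : Euc d, x ≠ 0 → ‖x‖ ≤ 1 → W x ≤ ((C_W * ‖x‖ ^ ((2 : ℝ) - β) : ℝ) : EReal)

/-- `W` is unstable: some probability measure has energy `< Winf/2`. -/
def Unstable {d : ℕ} (W : Euc d → EReal) (Winf : EReal) : Prop :=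
  ∃ ρ : Measure (Euc d), IsProbabilityMeasure ρ ∧
    contEnergy W ρ < (((1 : ℝ) / 2 : ℝ) : EReal) * Winf

/-- `W` is strictly stable: every probability measure has energy `> Winf/2`. -/
def StrictlyStable {d : ℕ} (W : Euc d → EReal) (Winf : EReal) : Prop :=
  ∀ ρ : Measure (Euc d), IsProbabilityMeasure ρ →
    (((1 : ℝ) / 2 : ℝ) : EReal) * Winf < contEnergy W ρ

/-- `W` is discretely unstable. -/
def DiscUnstable {d : ℕ} (W : Euc d → EReal) (Winf : EReal) : Prop :=
  ∃ s : ℝ, 0 < s ∧ ∃ Nbar : ℕ, 2 ≤ Nbar ∧ ∀ N : ℕ, Nbar < N →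
    ∃ X : Fin N → Euc d,
      discEnergy W N X < (((1 : ℝ) / 2 : ℝ) : EReal) * Winf - (s : EReal)

/-- `W` is H-unstable. -/
def HUnstable {d : ℕ} (W : Euc d → EReal) (Winf : EReal) : Prop :=
  ∀ B : ℝ, ∃ N : ℕ, 2 ≤ N ∧ ∃ X : Fin N → Euc d,
    discEnergy W N X < (((1 : ℝ) / 2 : ℝ) : EReal) * Winf - ((B / (2 * (N : ℝ)) : ℝ) : EReal)

/-- The Morrey exponent `d/q`, where `q` is the Hölder dual of `p`. -/
def morreyExp (d : ℕ) (p : ℝ≥0∞) : ℝ := (d : ℝ) * (1 - (p⁻¹).toReal)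

end

private lemma ereal_coe_sum {α : Type*} (s : Finset α) (f : α → ℝ) :
    ((∑ x ∈ s, f x : ℝ) : EReal) = ∑ x ∈ s, ((f x : ℝ) : EReal) := by
  classical
  induction s using Finset.induction_on with
  | empty => simp
  | insert _ _ h ih => rw [Finset.sum_insert h, Finset.sum_insert h, EReal.coe_add, ih]

/-- Euler–Lagrange estimate under (H3a):
`|P_i(X) − 2E_N(X)| ≤ (W(0) − Wmin)/N` for a discrete minimiser `X`, stated as two
one-sided inequalities in the extended reals. -/
theorem euler_lagrange_estimate_bounded_case
    {d : ℕ} (hd : 0 < d) (W : Euc d → EReal) (Wmin : ℝ) (Winf : EReal) (RW : ℝ)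
    (h1 : Hyp1 W Wmin) (h2 : Hyp2 W Winf RW) (h3a : Hyp3a W)
    (N : ℕ) (hN : 2 ≤ N) (X : Fin N → Euc d) (hX : IsDiscMinimiser W N X) :
    ∀ i : Fin N,
      particlePotential W N X i ≤
        ((2 : ℝ) : EReal) * discEnergy W N X +
          (((N : ℝ)⁻¹ : ℝ) : EReal) * (W 0 - (Wmin : EReal)) ∧
      ((2 : ℝ) : EReal) * discEnergy W N X ≤
        particlePotential W N X i +
          (((N : ℝ)⁻¹ : ℝ) : EReal) * (W 0 - (Wmin : EReal)) := by
  classical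
  intro i
  obtain ⟨hlsc, hmin, hloc⟩ := h1
  obtain ⟨⟨C, hC⟩, husc⟩ := h3a
  obtain ⟨_, hsymmW, _, _⟩ := h2
  have hbot : ∀ x, W x ≠ ⊥ := fun x => ((EReal.bot_lt_coe Wmin).trans_le (hmin x)).ne'
  have htop : ∀ x, W x ≠ ⊤ := fun x => ((hC x).trans_lt (EReal.coe_lt_top C)).ne
  set w : Euc d → ℝ := fun x => (W x).toReal with hwdef
  have hWw : ∀ x, W x = ((w x : ℝ) : EReal) := fun x => (EReal.coe_toReal (htop x) (hbot x)).symm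
  have hwsymm : ∀ x : Euc d, w (-x) = w x := fun x => by simp only [hwdef, hsymmW x]
  have hwsub : ∀ x y : Euc d, w (x - y) = w (y - x) := fun x y => by
    rw [← hwsymm (y - x), neg_sub]
  have hwmin : ∀ x, Wmin ≤ w x := fun x => by
    have h := hmin x; rw [hWw x] at h; exact_mod_cast h
  have hNpos : (0 : ℝ) < (N : ℝ) := by
    have : (0 : ℕ) < N := lt_of_lt_of_le (by norm_num) hN
    exact_mod_cast this
  have hNne : (N : ℝ) ≠ 0 := ne_of_gt hNpos
  -- real-valued sums
  set S : (Fin N → Euc d) → ℝ :=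
    fun Y => ∑ a : Fin N, ∑ b ∈ Finset.univ.erase a, w (Y a - Y b) with hSdef
  set P : Fin N → ℝ := fun k => ∑ b ∈ Finset.univ.erase k, w (X k - X b) with hPdef
  have hdisc : ∀ Y : Fin N → Euc d,
      discEnergy W N Y = (((1 / (2 * (N : ℝ) ^ 2)) * S Y : ℝ) : EReal) := by
    intro Y
    unfold discEnergy
    rw [EReal.coe_mul]
    congr 1
    rw [hSdef]
    rw [ereal_coe_sum]
    refine Finset.sum_congr rfl fun a _ => ?_
    rw [ereal_coe_sum]
    exact Finset.sum_congr rfl fun b _ => (hWw _)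
  have hpot : particlePotential W N X i = ((((N : ℝ)⁻¹) * P i : ℝ) : EReal) := by
    unfold particlePotential
    rw [EReal.coe_mul]
    congr 1
    rw [hPdef, ereal_coe_sum]
    exact Finset.sum_congr rfl fun b _ => (hWw _)
  -- split the double sum at index k
  have hsplit : ∀ (Y : Fin N → Euc d) (k : Fin N),
      S Y = (∑ b ∈ Finset.univ.erase k, w (Y k - Y b)) +
        ∑ a ∈ Finset.univ.erase k,
          (w (Y a - Y k) + ∑ b ∈ (Finset.univ.erase a).erase k, w (Y a - Y b)) := by
    intro Y k
    show (∑ a : Fin N, ∑ b ∈ Finset.univ.erase a, w (Y a - Y b)) = _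
    rw [← Finset.add_sum_erase Finset.univ _ (Finset.mem_univ k)]
    congr 1
    refine Finset.sum_congr rfl fun a ha => ?_
    have hka : k ∈ Finset.univ.erase a :=
      Finset.mem_erase.mpr ⟨(Finset.ne_of_mem_erase ha).symm, Finset.mem_univ k⟩
    exact (Finset.add_sum_erase _ _ hka).symm
  -- minimality: moving particle k to y
  have key : ∀ (k : Fin N) (y : Euc d),
      P k ≤ ∑ b ∈ Finset.univ.erase k, w (y - X b) := by
    intro k y
    set Y := Function.update X k y with hYdef
    have hSle : S X ≤ S Y := by
      have hm := hX Y
      rw [hdisc X, hdisc Y, EReal.coe_le_coe_iff] at hm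
      have hc : (0 : ℝ) < 1 / (2 * (N : ℝ) ^ 2) := by positivity
      exact le_of_mul_le_mul_left hm hc
    have hYk : Y k = y := Function.update_self k y X
    have hYa : ∀ a : Fin N, a ≠ k → Y a = X a := fun a ha => Function.update_of_ne ha y X
    have hSX : S X = P k + ∑ a ∈ Finset.univ.erase k,
        (w (X k - X a) + ∑ b ∈ (Finset.univ.erase a).erase k, w (X a - X b)) := by
      rw [hsplit X k]
      congr 1
      refine Finset.sum_congr rfl fun a _ => ?_
      rw [hwsub (X a) (X k)]
    have hSY : S Y = (∑ b ∈ Finset.univ.erase k, w (y - X b)) +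
        ∑ a ∈ Finset.univ.erase k,
          (w (y - X a) + ∑ b ∈ (Finset.univ.erase a).erase k, w (X a - X b)) := by
      rw [hsplit Y k]
      congr 1
      · refine Finset.sum_congr rfl fun b hb => ?_
        rw [hYk, hYa b (Finset.ne_of_mem_erase hb)]
      · refine Finset.sum_congr rfl fun a ha => ?_
        have hak := Finset.ne_of_mem_erase ha
        congr 1
        · rw [hYk, hYa a hak, hwsub (X a) y]
        · refine Finset.sum_congr rfl fun b hb => ?_
          rw [hYa a hak, hYa b (Finset.ne_of_mem_erase hb)]
    rw [hSX, hSY, Finset.sum_add_distrib, Finset.sum_add_distrib] at hSle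
    linarith
  -- relate sums over erase k vs erase l
  have hA : ∀ k l : Fin N, k ≠ l →
      (∑ b ∈ Finset.univ.erase k, w (X l - X b)) = P l + w 0 - w (X l - X k) := by
    intro k l hkl
    have hlk : l ∈ Finset.univ.erase k := Finset.mem_erase.mpr ⟨hkl.symm, Finset.mem_univ l⟩
    have hkl' : k ∈ Finset.univ.erase l := Finset.mem_erase.mpr ⟨hkl, Finset.mem_univ k⟩
    have h1 := (Finset.add_sum_erase _ (fun b => w (X l - X b)) hlk).symm
    have h2 := (Finset.add_sum_erase _ (fun b => w (X l - X b)) hkl').symm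
    have h3 : (Finset.univ.erase k).erase l = (Finset.univ.erase l).erase k :=
      Finset.erase_right_comm
    rw [h3] at h1
    rw [hPdef]
    simp only [sub_self] at h1
    linarith [h1, h2]
  -- pairwise estimate
  have hPP : ∀ k l : Fin N, P k ≤ P l + (w 0 - Wmin) := by
    intro k l
    by_cases hkl : k = l
    · subst hkl; linarith [hwmin (0 : Euc d)]
    · have h := key k (X l)
      rw [hA k l hkl] at h
      linarith [hwmin (X l - X k)]
  have hSP : S X = ∑ k : Fin N, P k := rfl
  -- sum the pairwise estimates
  have hsum1 : (N : ℝ) * P i ≤ S X + (N : ℝ) * (w 0 - Wmin) := by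
    have h := Finset.sum_le_sum (fun l (_ : l ∈ Finset.univ) => hPP i l)
    simp only [Finset.sum_add_distrib, Finset.sum_const, Finset.card_univ, Fintype.card_fin,
      nsmul_eq_mul] at h
    rw [hSP]
    linarith
  have hsum2 : S X ≤ (N : ℝ) * P i + (N : ℝ) * (w 0 - Wmin) := by
    have h := Finset.sum_le_sum (fun k (_ : k ∈ Finset.univ) => hPP k i)
    simp only [Finset.sum_add_distrib, Finset.sum_const, Finset.card_univ, Fintype.card_fin,
      nsmul_eq_mul] at h
    rw [hSP]
    linarith
  -- convert goal to reals
  have herr : (((N : ℝ)⁻¹ : ℝ) : EReal) * (W 0 - (Wmin : EReal)) =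
      (((N : ℝ)⁻¹ * (w 0 - Wmin) : ℝ) : EReal) := by
    rw [hWw 0, ← EReal.coe_sub, ← EReal.coe_mul]
  have hinv : (0 : ℝ) ≤ (N : ℝ)⁻¹ := inv_nonneg.mpr hNpos.le
  have hkey1 : P i ≤ (N : ℝ)⁻¹ * S X + (w 0 - Wmin) := by
    have h := mul_le_mul_of_nonneg_left hsum1 hinv
    rw [← mul_assoc, inv_mul_cancel₀ hNne, one_mul, mul_add, ← mul_assoc,
      inv_mul_cancel₀ hNne, one_mul] at h
    exact h
  have hkey2 : (N : ℝ)⁻¹ * S X ≤ P i + (w 0 - Wmin) := by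
    have h := mul_le_mul_of_nonneg_left hsum2 hinv
    rw [mul_add, ← mul_assoc, inv_mul_cancel₀ hNne, one_mul, ← mul_assoc,
      inv_mul_cancel₀ hNne, one_mul] at h
    exact h
  have heq : 2 * (1 / (2 * (N : ℝ) ^ 2) * S X) = (N : ℝ)⁻¹ * ((N : ℝ)⁻¹ * S X) := by
    field_simp
  constructor
  · rw [hpot, hdisc X, herr, ← EReal.coe_mul, ← EReal.coe_add, EReal.coe_le_coe_iff]
    calc (N : ℝ)⁻¹ * P i
        ≤ (N : ℝ)⁻¹ * ((N : ℝ)⁻¹ * S X + (w 0 - Wmin)) :=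
          mul_le_mul_of_nonneg_left hkey1 hinv
      _ = 2 * (1 / (2 * (N : ℝ) ^ 2) * S X) + (N : ℝ)⁻¹ * (w 0 - Wmin) := by
          rw [heq, mul_add]
  · rw [hpot, hdisc X, herr, ← EReal.coe_mul, ← EReal.coe_add, EReal.coe_le_coe_iff]
    calc 2 * (1 / (2 * (N : ℝ) ^ 2) * S X)
        = (N : ℝ)⁻¹ * ((N : ℝ)⁻¹ * S X) := heq
      _ ≤ (N : ℝ)⁻¹ * (P i + (w 0 - Wmin)) := mul_le_mul_of_nonneg_left hkey2 hinv
      _ = (N : ℝ)⁻¹ * P i + (N : ℝ)⁻¹ * (w 0 - Wmin) := mul_add _ _ _
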